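/- Let 𝒜 be an admissible Banach A-valued function algebra on X with 𝔄 = 𝒜 ∩ C(X). If the map 𝒥 : Δ(𝔄) × Δ(A) → Δ(𝒜), 𝒥(ψ,φ)(f) = ψ(φ∘f), is surjective, then it is a homeomorphism with respect to the Gelfand topologies. -/

import Mathlib

open WeakDual

variable {X : Type*} [TopologicalSpace X] [CompactSpace X] [T2Space X] [Nonempty X]
variable {A : Type*} [NormedCommRing A] [NormedAlgebra ℂ A] [CompleteSpace A] [Nontrivial A]
variable {B : Type*} [NormedCommRing B] [NormedAlgebra ℂ B] [CompleteSpace B]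

/-- The embedding of scalar-valued continuous functions into `A`-valued ones,
`g ↦ g·𝟏`. -/
noncomputable def scalHom (X A : Type*) [TopologicalSpace X] [NormedCommRing A]
    [NormedAlgebra ℂ A] : C(X, ℂ) →ₐ[ℂ] C(X, A) :=
  AlgHom.compLeftContinuous ℂ (Algebra.ofId ℂ A) (continuous_algebraMap ℂ A)

/-- The scalar subalgebra `𝔄 = 𝒜 ∩ C(X)`, realized inside `C(X, ℂ)`: those scalar
functions `g` with `g·𝟏 ∈ 𝒜`. -/
noncomputable def scalarSub (ι : B →ₐ[ℂ] C(X, A)) : Subalgebra ℂ C(X, ℂ) :=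
  Subalgebra.comap (scalHom X A) (AlgHom.range ι)

/-- The Gelfand topology on a character space: the topology of pointwise convergence. -/
noncomputable instance algHomGelfandTopology (R : Type*) [Semiring R] [Algebra ℂ R] :
    TopologicalSpace (R →ₐ[ℂ] ℂ) :=
  TopologicalSpace.induced (fun ψ => (ψ : R → ℂ)) inferInstance

lemma scalHom_apply {X A : Type*} [TopologicalSpace X] [NormedCommRing A]
    [NormedAlgebra ℂ A] (g : C(X, ℂ)) (x : X) :
    scalHom X A g x = algebraMap ℂ A (g x) := rfl

instance algHomGelfandT2 (R : Type*) [Semiring R] [Algebra ℂ R] : T2Space (R →ₐ[ℂ] ℂ) :=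
  Topology.IsEmbedding.t2Space ⟨⟨rfl⟩, fun _ _ h => DFunLike.coe_injective h⟩

section Aux

variable {X : Type*} [TopologicalSpace X] [CompactSpace X] [T2Space X] [Nonempty X]
variable {A : Type*} [NormedCommRing A] [NormedAlgebra ℂ A] [CompleteSpace A] [Nontrivial A]
variable {B : Type*} [NormedCommRing B] [NormedAlgebra ℂ B] [CompleteSpace B]

/-- The lift of an element of the scalar subalgebra back to `B`. -/
noncomputable def liftFun (ι : B →ₐ[ℂ] C(X, A)) (g : ↥(scalarSub ι)) : B :=
  ((AlgHom.mem_range _).mp ((Subalgebra.mem_comap _ _ _).mp g.2)).choose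

lemma liftFun_spec (ι : B →ₐ[ℂ] C(X, A)) (g : ↥(scalarSub ι)) :
    ι (liftFun ι g) = scalHom X A g :=
  ((AlgHom.mem_range _).mp ((Subalgebra.mem_comap _ _ _).mp g.2)).choose_spec

lemma liftFun_apply (ι : B →ₐ[ℂ] C(X, A)) (g : ↥(scalarSub ι)) (x : X) :
    ι (liftFun ι g) x = algebraMap ℂ A ((g : C(X, ℂ)) x) := by
  rw [liftFun_spec]; rfl

/-- The lift, as an algebra homomorphism. -/
noncomputable def rhoA (ι : B →ₐ[ℂ] C(X, A)) (hinj : Function.Injective ι) :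
    ↥(scalarSub ι) →ₐ[ℂ] B where
  toFun := liftFun ι
  map_one' := hinj <| by rw [liftFun_spec]; simp
  map_mul' g₁ g₂ := hinj <| by
    rw [map_mul, liftFun_spec, liftFun_spec, liftFun_spec]; simp
  map_zero' := hinj <| by rw [liftFun_spec]; simp
  map_add' g₁ g₂ := hinj <| by
    rw [map_add, liftFun_spec, liftFun_spec, liftFun_spec]; simp
  commutes' r := hinj <| by rw [liftFun_spec]; simp

lemma rhoA_apply (ι : B →ₐ[ℂ] C(X, A)) (hinj : Function.Injective ι)
    (g : ↥(scalarSub ι)) : rhoA ι hinj g = liftFun ι g := rfl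

/-- The map `f ↦ φ ∘ (ι f)` as an algebra homomorphism `B → 𝔄`. -/
noncomputable def gAlg (ι : B →ₐ[ℂ] C(X, A))
    (hadm : ∀ (f : B) (φ : A →ₐ[ℂ] ℂ), ∃ g : B, ∀ x : X, ι g x = algebraMap ℂ A (φ (ι f x)))
    (φ : A →ₐ[ℂ] ℂ) : B →ₐ[ℂ] ↥(scalarSub ι) where
  toFun f := ⟨⟨fun x => φ (ι f x), (map_continuous φ).comp (ι f).continuous⟩,
    (Subalgebra.mem_comap _ _ _).mpr ((AlgHom.mem_range _).mpr ⟨(hadm f φ).choose,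
      ContinuousMap.ext fun x => (hadm f φ).choose_spec x⟩)⟩
  map_one' := Subtype.ext <| ContinuousMap.ext fun x => by simp
  map_mul' f₁ f₂ := Subtype.ext <| ContinuousMap.ext fun x => by simp
  map_zero' := Subtype.ext <| ContinuousMap.ext fun x => by simp
  map_add' f₁ f₂ := Subtype.ext <| ContinuousMap.ext fun x => by simp
  commutes' r := Subtype.ext <| ContinuousMap.ext fun x => by simp

lemma gAlg_apply (ι : B →ₐ[ℂ] C(X, A))
    (hadm : ∀ (f : B) (φ : A →ₐ[ℂ] ℂ), ∃ g : B, ∀ x : X, ι g x = algebraMap ℂ A (φ (ι f x)))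
    (φ : A →ₐ[ℂ] ℂ) (f : B) (x : X) :
    ((gAlg ι hadm φ f : C(X, ℂ)) x) = φ (ι f x) := rfl

end Aux

/-- If the map 𝒥 : Δ(𝔄) × Δ(A) → Δ(𝒜), 𝒥(ψ,φ)(f) = ψ(φ∘f), is surjective, then it is
a homeomorphism with respect to the Gelfand topologies. -/
theorem stmt13
(ι : B →ₐ[ℂ] C(X, A)) (hinj : Function.Injective ι)
    (κ : A →ₐ[ℂ] B) (hκ : ∀ a : A, ι (κ a) = ContinuousMap.const X a)
    (hκnorm : ∃ c₁ > (0:ℝ), ∃ c₂ > (0:ℝ), ∀ a : A, c₁ * ‖a‖ ≤ ‖κ a‖ ∧ ‖κ a‖ ≤ c₂ * ‖a‖)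
    (hdom : ∀ f : B, ‖ι f‖ ≤ ‖f‖)
    (hsep : ∀ x y : X, x ≠ y → ∀ M : Ideal A, M.IsMaximal → ∃ f : B, ι f x - ι f y ∉ M)
    (hss : Ideal.jacobson (⊥ : Ideal A) = ⊥)
    (hadm : ∀ (f : B) (φ : A →ₐ[ℂ] ℂ), ∃ g : B, ∀ x : X, ι g x = algebraMap ℂ A (φ (ι f x)))
    (hsurj : ∀ τ : B →ₐ[ℂ] ℂ, ∃ (ψ : ↥(scalarSub ι) →ₐ[ℂ] ℂ) (φ : A →ₐ[ℂ] ℂ),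
      ∀ (f : B) (g₀ : ↥(scalarSub ι)),
        (∀ x : X, (g₀ : C(X, ℂ)) x = φ (ι f x)) → τ f = ψ g₀) :
    ∃ H : ((↥(scalarSub ι) →ₐ[ℂ] ℂ) × (A →ₐ[ℂ] ℂ)) ≃ₜ (B →ₐ[ℂ] ℂ),
      ∀ (ψ : ↥(scalarSub ι) →ₐ[ℂ] ℂ) (φ : A →ₐ[ℂ] ℂ) (f : B) (g₀ : ↥(scalarSub ι)),
        (∀ x : X, (g₀ : C(X, ℂ)) x = φ (ι f x)) → H (ψ, φ) f = ψ g₀ := by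
  classical
  set ρ : ↥(scalarSub ι) →ₐ[ℂ] B := rhoA ι hinj with hρ
  set Jmap : ((↥(scalarSub ι) →ₐ[ℂ] ℂ) × (A →ₐ[ℂ] ℂ)) → (B →ₐ[ℂ] ℂ) :=
    fun p => p.1.comp (gAlg ι hadm p.2) with hJ
  set Kmap : (B →ₐ[ℂ] ℂ) → ((↥(scalarSub ι) →ₐ[ℂ] ℂ) × (A →ₐ[ℂ] ℂ)) :=
    fun τ => (τ.comp ρ, τ.comp κ) with hK
  -- J ∘ K = id
  have hJK : ∀ p, Kmap (Jmap p) = p := by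
    rintro ⟨ψ, φ⟩
    have h1 : (Jmap (ψ, φ)).comp ρ = ψ := by
      ext g₀
      have : gAlg ι hadm φ (ρ g₀) = g₀ := by
        refine Subtype.ext (ContinuousMap.ext fun x => ?_)
        rw [gAlg_apply, hρ, rhoA_apply, liftFun_apply, AlgHom.commutes]
        simp
      simp only [hJ, AlgHom.comp_apply, this]
    have h2 : (Jmap (ψ, φ)).comp κ = φ := by
      ext a
      have : gAlg ι hadm φ (κ a) = algebraMap ℂ ↥(scalarSub ι) (φ a) := by
        refine Subtype.ext (ContinuousMap.ext fun x => ?_)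
        rw [gAlg_apply, hκ]
        simp [Subalgebra.algebraMap_eq]
      simp only [hK, hJ, AlgHom.comp_apply, this, AlgHom.commutes]
      simp
    simp only [hK, h1, h2]
  -- K ∘ J = id
  have hKJ : ∀ τ, Jmap (Kmap τ) = τ := by
    intro τ
    obtain ⟨ψ, φ, hp⟩ := hsurj τ
    have e1 : τ.comp κ = φ := by
      ext a
      have cond : ∀ x : X,
          ((algebraMap ℂ ↥(scalarSub ι) (φ a) : ↥(scalarSub ι)) : C(X, ℂ)) x
            = φ (ι (κ a) x) := by
        intro x
        rw [hκ]
        simp [Subalgebra.algebraMap_eq]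
      have := hp (κ a) (algebraMap ℂ ↥(scalarSub ι) (φ a)) cond
      rw [AlgHom.comp_apply, this, AlgHom.commutes]
      simp
    have e2 : ∀ g₀ : ↥(scalarSub ι), τ (ρ g₀) = ψ g₀ := by
      intro g₀
      refine hp (ρ g₀) g₀ fun x => ?_
      rw [hρ, rhoA_apply, liftFun_apply, AlgHom.commutes]
      simp
    ext f
    have cond : ∀ x : X, ((gAlg ι hadm φ f : ↥(scalarSub ι)) : C(X, ℂ)) x = φ (ι f x) :=
      fun x => rfl
    calc Jmap (Kmap τ) f = τ (ρ (gAlg ι hadm (τ.comp κ) f)) := rfl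
      _ = τ (ρ (gAlg ι hadm φ f)) := by rw [e1]
      _ = ψ (gAlg ι hadm φ f) := e2 _
      _ = τ f := (hp f _ cond).symm
  -- continuity of K
  have hKcont : Continuous Kmap := by
    apply Continuous.prodMk
    · apply continuous_induced_rng.mpr
      exact continuous_pi fun g₀ => (continuous_apply (ρ g₀)).comp continuous_induced_dom
    · apply continuous_induced_rng.mpr
      exact continuous_pi fun a => (continuous_apply (κ a)).comp continuous_induced_dom
  -- compactness of Δ(B)
  have hcs : CompactSpace (B →ₐ[ℂ] ℂ) := by
    have hc : Continuous (WeakDual.CharacterSpace.equivAlgHom (𝕜 := ℂ) (A := B)) := by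
      apply continuous_induced_rng.mpr
      show Continuous fun χ : characterSpace ℂ B => (χ : B → ℂ)
      exact continuous_pi fun b =>
        (WeakDual.eval_continuous b).comp continuous_subtype_val
    constructor
    rw [← Set.range_eq_univ.mpr (WeakDual.CharacterSpace.equivAlgHom (𝕜 := ℂ) (A := B)).surjective]
    exact isCompact_range hc
  let E : (B →ₐ[ℂ] ℂ) ≃ ((↥(scalarSub ι) →ₐ[ℂ] ℂ) × (A →ₐ[ℂ] ℂ)) :=
    ⟨Kmap, Jmap, hKJ, hJK⟩
  have hEcont : Continuous E := hKcont
  let Hm : (B →ₐ[ℂ] ℂ) ≃ₜ ((↥(scalarSub ι) →ₐ[ℂ] ℂ) × (A →ₐ[ℂ] ℂ)) :=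
    hEcont.homeoOfEquivCompactToT2
  refine ⟨Hm.symm, ?_⟩
  intro ψ φ f g₀ hg
  have h1 : Hm.symm (ψ, φ) = Jmap (ψ, φ) := rfl
  have h2 : gAlg ι hadm φ f = g₀ :=
    Subtype.ext (ContinuousMap.ext fun x => (hg x).symm)
  rw [h1]
  simp only [hJ, AlgHom.comp_apply, h2]
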